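/- arXiv:2009.12231 — 3 statements merged into one kernel-verified Lean document; each statement's English description precedes it below -/
import Mathlib

section
/- Let K ≥ 2, 1 ≤ t < K, and t ≤ α ≤ K - t. With the cyclic placement matrix V[p,k] = 1 iff (k-p) mod K ∈ {0,…,t-1}, define for each j ∈ [K-t] and round r ∈ [K] the user vector k_j^r = (k_j¹ + r) % K and packet vector p_j^r = (p_j¹ + r) % K (componentwise, with a % b = ((a-1) mod b)+1), where k_j¹ = [[1:t]; (([1:α]+j-1)%(K-t))+t] and p_j¹ = [((t+j-[1:t])%(K-t))+[1:t]; e(α)] with e(α) the all-ones vector of length α. Then for every n ∈ [t+α], V[p_j^r[n], k_j^r[n]] = 0. -/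
/-- The mod operator with offset one. -/
def pmod (a b : ℕ) : ℕ := (a - 1) % b + 1

/-- The cyclic placement matrix: `V K t p k = 1` iff `(k - p) mod K ∈ {0,…,t-1}`. -/
noncomputable def V (K t p k : ℕ) : ℕ :=
  if ((k : ℤ) - (p : ℤ)) % (K : ℤ) ∈ Finset.Ico (0 : ℤ) (t : ℤ) then 1 else 0

/-- Entry `n` of the round-1 user index vector `k_j¹`. -/
def kvec1 (K t j n : ℕ) : ℕ :=
  if n ≤ t then n else pmod (n - t + j - 1) (K - t) + t

/-- Entry `n` of the round-1 packet index vector `p_j¹`. -/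
def pvec1 (K t j n : ℕ) : ℕ :=
  if n ≤ t then pmod (t + j - n) (K - t) + n else 1

/-- Entry `n` of the round-`r` user index vector `k_j^r = (k_j¹ + r) % K`. -/
def kvec (K t j r n : ℕ) : ℕ := pmod (kvec1 K t j n + r) K

/-- Entry `n` of the round-`r` packet index vector `p_j^r = (p_j¹ + r) % K`. -/
def pvec (K t j r n : ℕ) : ℕ := pmod (pvec1 K t j n + r) K

lemma emod_lower (K t a b d : ℕ)
    (hd : (a : ℤ) - b = (d : ℤ) - K ∨ (a : ℤ) - b = d)
    (hdt : t ≤ d) (hdK : d < K) :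
    (t : ℤ) ≤ (((a % K + 1 : ℕ) : ℤ) - ((b % K + 1 : ℕ) : ℤ)) % K := by
  have h1 : (((a % K + 1 : ℕ) : ℤ) - ((b % K + 1 : ℕ) : ℤ)) % K
      = ((a : ℤ) - b) % K := by
    push_cast
    have : ((a : ℤ) % K + 1 - ((b : ℤ) % K + 1)) = (a : ℤ) % K - (b : ℤ) % K := by ring
    rw [this, ← Int.sub_emod]
  rw [h1]
  rcases hd with hd | hd
  · rw [hd]
    have : ((d : ℤ) - K) % K = (d : ℤ) % K := by simp [Int.sub_emod]
    rw [this, Int.emod_eq_of_lt (by positivity) (by exact_mod_cast hdK)]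
    exact_mod_cast hdt
  · rw [hd, Int.emod_eq_of_lt (by positivity) (by exact_mod_cast hdK)]
    exact_mod_cast hdt

theorem delivery_targets_uncached (K t α : ℕ) (hK : 2 ≤ K) (ht : 1 ≤ t) (htK : t < K)
    (htα : t ≤ α) (hαK : α ≤ K - t) :
    ∀ j ∈ Finset.Icc 1 (K - t), ∀ r ∈ Finset.Icc 1 K, ∀ n ∈ Finset.Icc 1 (t + α),
      V K t (pvec K t j r n) (kvec K t j r n) = 0 := by
  intro j hj r hr n hn
  simp only [Finset.mem_Icc] at hj hr hn
  have hKt : 0 < K - t := by omega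
  unfold V
  rw [if_neg]
  simp only [Finset.mem_Ico, not_and, not_lt]
  intro _
  unfold kvec pvec kvec1 pvec1 pmod
  by_cases hnt : n ≤ t
  · simp only [if_pos hnt]
    set m := (t + j - n - 1) % (K - t) with hm
    have hmlt : m < K - t := Nat.mod_lt _ hKt
    exact emod_lower K t (n + r - 1) ((t + j - n - 1) % (K - t) + 1 + n + r - 1)
      (K - m - 1) (Or.inl (by omega)) (by omega) (by omega)
  · simp only [if_neg hnt]
    set m := (n - t + j - 1 - 1) % (K - t) with hm
    have hmlt : m < K - t := Nat.mod_lt _ hKt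
    exact emod_lower K t ((n - t + j - 1 - 1) % (K - t) + 1 + t + r - 1) (1 + r - 1)
      (m + t) (Or.inr (by omega)) (by omega) (by omega)
end

section
/- Let K ≥ 2, 1 ≤ t < K, and t ≤ α ≤ K - t. With the cyclic-caching user and packet index vectors k_j^r and p_j^r defined as in the scheme (k_j¹ = [[1:t]; (([1:α]+j-1)%(K-t))+t], p_j¹ = [((t+j-[1:t])%(K-t))+[1:t]; e(α)], and k_j^r = (k_j¹+r)%K, p_j^r = (p_j¹+r)%K), for every pair (p,k) with V[p,k] = 0 the number of triples (j, r, n) ∈ [K-t] × [K] × [t+α] with p = p_j^r[n] and k = k_j^r[n] is exactly t + α. -/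
/-- The unique `j` such that entry `n` of round vectors hits the pair with difference `D`. -/
def jfun (K t D n : ℕ) : ℕ :=
  if n ≤ t then (K - 1 - D + n + (K - t) * t - t) % (K - t) + 1
  else (D + 1 + (K - t) * K - n) % (K - t) + 1

/-- The unique round `r` such that entry `n` of `k_{jfun}^r` equals `k`. -/
def rfun (K t D k n : ℕ) : ℕ := (k + K - kvec1 K t (jfun K t D n) n - 1) % K + 1

lemma modK {m a b : ℕ} (hb : b < m) (h : ∃ q, a = m * q + b) : a % m = b := by
  obtain ⟨q, rfl⟩ := h
  rw [Nat.mul_add_mod, Nat.mod_eq_of_lt hb]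

lemma mod_inj' {m a b : ℕ} (h : a % m = b % m) (h1 : a < b + m) (h2 : b < a + m) : a = b := by
  rcases le_total a b with hab | hab
  · have hd := (Nat.modEq_iff_dvd' hab).mp h
    rcases Nat.eq_zero_or_pos (b - a) with h0 | h0
    · omega
    · have := Nat.le_of_dvd h0 hd; omega
  · have hd := (Nat.modEq_iff_dvd' hab).mp h.symm
    rcases Nat.eq_zero_or_pos (a - b) with h0 | h0
    · omega
    · have := Nat.le_of_dvd h0 hd; omega

lemma jfun_bounds (K t D n : ℕ) (htK : t < K) :
    1 ≤ jfun K t D n ∧ jfun K t D n ≤ K - t := by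
  have hM : 0 < K - t := by omega
  rw [jfun]
  split
  · have := Nat.mod_lt (K - 1 - D + n + (K - t) * t - t) hM; omega
  · have := Nat.mod_lt (D + 1 + (K - t) * K - n) hM; omega

lemma kvec1_bounds (K t j n : ℕ) (ht : 1 ≤ t) (htK : t < K) (hn : 1 ≤ n) :
    1 ≤ kvec1 K t j n ∧ kvec1 K t j n ≤ K := by
  have hM : 0 < K - t := by omega
  rw [kvec1]
  split
  · omega
  · rw [pmod]
    have := Nat.mod_lt (n - t + j - 1 - 1) hM
    omega

lemma pvec1_bounds (K t j n : ℕ) (ht : 1 ≤ t) (htK : t < K) (hn : 1 ≤ n) :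
    1 ≤ pvec1 K t j n ∧ pvec1 K t j n ≤ K := by
  have hM : 0 < K - t := by omega
  rw [pvec1]
  split
  · rw [pmod]
    have := Nat.mod_lt (t + j - n - 1) hM
    omega
  · omega

lemma key1 (K t D n : ℕ) (ht : 1 ≤ t) (htK : t < K) (htD : t ≤ D) (hDK : D < K)
    (hn1 : 1 ≤ n) (hnt : n ≤ t) :
    (t + jfun K t D n - n - 1) % (K - t) = K - 1 - D := by
  have hM : 0 < K - t := by omega
  rw [jfun, if_pos hnt]
  set B := (K - t) * t with hB
  have hBt : t ≤ B := Nat.le_mul_of_pos_left t hM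
  set c := (K - 1 - D + n + B - t) % (K - t) with hc
  have h1 : t + (c + 1) - n - 1 = (t - n) + c := by omega
  rw [h1, hc, Nat.add_mod_mod]
  apply modK (by omega)
  exact ⟨t, by omega⟩

lemma key2 (K t D n : ℕ) (ht : 1 ≤ t) (htK : t < K) (htD : t ≤ D) (hDK : D < K)
    (hnt : t < n) (hnK : n ≤ K) :
    (n - t + jfun K t D n - 2) % (K - t) = D - t := by
  have hM : 0 < K - t := by omega
  rw [jfun, if_neg (by omega)]
  set B := (K - t) * K with hB
  have hBK : K ≤ B := Nat.le_mul_of_pos_left K hM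
  set c := (D + 1 + B - n) % (K - t) with hc
  have h1 : n - t + (c + 1) - 2 = (n - t - 1) + c := by omega
  rw [h1, hc, Nat.add_mod_mod]
  apply modK (by omega)
  exact ⟨K, by omega⟩

lemma main_iff (K t D p k j r n : ℕ) (ht : 1 ≤ t) (htK : t < K)
    (hp1 : 1 ≤ p) (hpK : p ≤ K) (hk1 : 1 ≤ k) (hkK : k ≤ K)
    (htD : t ≤ D) (hDK : D < K) (hDpk : D + p = k ∨ D + p = k + K)
    (hj : 1 ≤ j) (hjM : j ≤ K - t) (hr : 1 ≤ r) (hrK : r ≤ K)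
    (hn : 1 ≤ n) (hnK : n ≤ K) :
    (p = pvec K t j r n ∧ k = kvec K t j r n) ↔
      (j = jfun K t D n ∧ r = rfun K t D k n) := by
  have hM : 0 < K - t := by omega
  have hK0 : 0 < K := by omega
  obtain ⟨hjfl, hjfu⟩ := jfun_bounds K t D n htK
  obtain ⟨hkv1l, hkv1u⟩ := kvec1_bounds K t (jfun K t D n) n ht htK hn
  -- value of kvec1 / pvec1 at jfun
  -- generic computation: for the chosen j' = jfun, r' = rfun,
  -- (kvec1 + rfun - 1) % K = k - 1
  have hrfl : 1 ≤ rfun K t D k n := by rw [rfun]; omega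
  have hrfu : rfun K t D k n ≤ K := by
    rw [rfun]; have := Nat.mod_lt (k + K - kvec1 K t (jfun K t D n) n - 1) hK0; omega
  have hkcomp : (kvec1 K t (jfun K t D n) n + rfun K t D k n - 1) % K = k - 1 := by
    rw [rfun]
    set c := (k + K - kvec1 K t (jfun K t D n) n - 1) % K with hc
    have h1 : kvec1 K t (jfun K t D n) n + (c + 1) - 1 = kvec1 K t (jfun K t D n) n + c := by
      omega
    rw [h1, hc, Nat.add_mod_mod]
    apply modK (by omega)
    exact ⟨1, by omega⟩
  -- kvec1 value at jfun
  have hkv1 : kvec1 K t (jfun K t D n) n = if n ≤ t then n else D + 1 := by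
    by_cases hcase : n ≤ t
    · rw [kvec1, if_pos hcase, if_pos hcase]
    · rw [kvec1, if_neg hcase, if_neg hcase, pmod]
      have h2 : n - t + jfun K t D n - 1 - 1 = n - t + jfun K t D n - 2 := by omega
      rw [h2, key2 K t D n ht htK htD hDK (by omega) hnK]
      omega
  have hpv1 : pvec1 K t (jfun K t D n) n = if n ≤ t then K - D + n else 1 := by
    by_cases hcase : n ≤ t
    · rw [pvec1, if_pos hcase, if_pos hcase, pmod]
      have h2 : t + jfun K t D n - n - 1 = t + jfun K t D n - n - 1 := rfl
      have h3 : (t + jfun K t D n - n - 1) % (K - t) = K - 1 - D :=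
        key1 K t D n ht htK htD hDK hn hcase
      omega
    · rw [pvec1, if_neg hcase, if_neg hcase]
  have hpcomp : (pvec1 K t (jfun K t D n) n + rfun K t D k n - 1) % K = p - 1 := by
    rw [rfun]
    set c := (k + K - kvec1 K t (jfun K t D n) n - 1) % K with hc
    have hcq := Nat.div_add_mod (k + K - kvec1 K t (jfun K t D n) n - 1) K
    rw [← hc] at hcq
    set qq := (k + K - kvec1 K t (jfun K t D n) n - 1) / K with hqq
    have hclt : c < K := by rw [hc]; exact Nat.mod_lt _ hK0
    have hq01 : qq ≤ 1 := by
      by_contra hcon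
      push_neg at hcon
      have : K * 2 ≤ K * qq := Nat.mul_le_mul_left K hcon
      omega
    have h1 : pvec1 K t (jfun K t D n) n + (c + 1) - 1 = pvec1 K t (jfun K t D n) n + c := by
      omega
    rw [h1, hc, Nat.add_mod_mod]
    apply modK (by omega)
    rw [hkv1, hpv1]
    by_cases hcase : n ≤ t
    · simp only [if_pos hcase]
      rcases hDpk with h | h
      · exact ⟨2, by omega⟩
      · exact ⟨1, by omega⟩
    · simp only [if_neg hcase]
      rcases hDpk with h | h
      · exact ⟨1, by omega⟩
      · exact ⟨0, by omega⟩
  constructor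
  · rintro ⟨hP, hQ⟩
    -- extract mod equations
    obtain ⟨hkvl, hkvu⟩ := kvec1_bounds K t j n ht htK hn
    obtain ⟨hpvl, hpvu⟩ := pvec1_bounds K t j n ht htK hn
    rw [kvec, pmod] at hQ
    rw [pvec, pmod] at hP
    have hQ' : (kvec1 K t j n + r - 1) % K = k - 1 := by omega
    have hP' : (pvec1 K t j n + r - 1) % K = p - 1 := by omega
    have hqa := Nat.div_add_mod (kvec1 K t j n + r - 1) K
    have hqb := Nat.div_add_mod (pvec1 K t j n + r - 1) K
    rw [hQ'] at hqa
    rw [hP'] at hqb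
    set a := (kvec1 K t j n + r - 1) / K with ha
    set b := (pvec1 K t j n + r - 1) / K with hb
    have ha1 : a ≤ 1 := by
      by_contra hcon
      push_neg at hcon
      have : K * 2 ≤ K * a := Nat.mul_le_mul_left K hcon
      omega
    have hb1 : b ≤ 1 := by
      by_contra hcon
      push_neg at hcon
      have : K * 2 ≤ K * b := Nat.mul_le_mul_left K hcon
      omega
    -- case split on n ≤ t to find the c value
    have hjeq : j = jfun K t D n := by
      by_cases hcase : n ≤ t
      · rw [kvec1, if_pos hcase] at hqa
        rw [pvec1, if_pos hcase, pmod] at hqb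
        set c := (t + j - n - 1) % (K - t) with hc
        have hclt : c < K - t := Nat.mod_lt _ hM
        have hcval : c = K - 1 - D := by
          interval_cases a <;> interval_cases b <;> rcases hDpk with h | h <;> omega
        have hc2 : (t + jfun K t D n - n - 1) % (K - t) = K - 1 - D :=
          key1 K t D n ht htK htD hDK hn hcase
        have heq : t + j - n - 1 = t + jfun K t D n - n - 1 := by
          apply mod_inj' (by rw [← hc, hcval, hc2]) <;> omega
        omega
      · rw [kvec1, if_neg hcase, pmod] at hqa
        rw [pvec1, if_neg hcase] at hqb
        have h2 : n - t + j - 1 - 1 = n - t + j - 2 := by omega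
        rw [h2] at hqa
        set c := (n - t + j - 2) % (K - t) with hc
        have hclt : c < K - t := Nat.mod_lt _ hM
        have hcval : c = D - t := by
          interval_cases a <;> interval_cases b <;> rcases hDpk with h | h <;> omega
        have hc2 : (n - t + jfun K t D n - 2) % (K - t) = D - t :=
          key2 K t D n ht htK htD hDK (by omega) hnK
        have heq : n - t + j - 2 = n - t + jfun K t D n - 2 := by
          apply mod_inj' (by rw [← hc, hcval, hc2]) <;> omega
        omega
    refine ⟨hjeq, ?_⟩
    -- now r = rfun via mod injectivity
    rw [hjeq] at hQ'
    have heq : kvec1 K t (jfun K t D n) n + r - 1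
        = kvec1 K t (jfun K t D n) n + rfun K t D k n - 1 := by
      apply mod_inj' (by rw [hQ', hkcomp]) <;> omega
    omega
  · rintro ⟨rfl, rfl⟩
    constructor
    · rw [pvec, pmod]
      obtain ⟨hpvl, hpvu⟩ := pvec1_bounds K t (jfun K t D n) n ht htK hn
      omega
    · rw [kvec, pmod]
      omega

theorem delivery_counting (K t α : ℕ) (hK : 2 ≤ K) (ht : 1 ≤ t) (htK : t < K)
    (htα : t ≤ α) (hαK : α ≤ K - t) :
    ∀ p ∈ Finset.Icc 1 K, ∀ k ∈ Finset.Icc 1 K, V K t p k = 0 →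
      ((Finset.Icc 1 (K - t) ×ˢ Finset.Icc 1 K ×ˢ Finset.Icc 1 (t + α)).filter
          (fun x => p = pvec K t x.1 x.2.1 x.2.2 ∧ k = kvec K t x.1 x.2.1 x.2.2)).card
        = t + α := by
  intro p hp k hk hV
  simp only [Finset.mem_Icc] at hp hk
  obtain ⟨hp1, hpK⟩ := hp
  obtain ⟨hk1, hkK⟩ := hk
  have hK0 : 0 < K := by omega
  set D := (k + K - p) % K with hDdef
  have hDlt : D < K := Nat.mod_lt _ hK0
  have hDpk : D + p = k ∨ D + p = k + K := by
    rcases le_or_gt p k with h | h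
    · left
      rw [hDdef, show k + K - p = (k - p) + K by omega, Nat.add_mod_right,
        Nat.mod_eq_of_lt (by omega)]
      omega
    · right
      rw [hDdef, Nat.mod_eq_of_lt (by omega)]
      omega
  have hcast : ((k : ℤ) - p) % K = (D : ℤ) := by
    have h1 : ((k : ℤ) - p) % K = ((D : ℤ)) % K := by
      rcases hDpk with h | h
      · rw [show (k : ℤ) - p = (D : ℤ) by push_cast; omega]
      · rw [show (k : ℤ) - p = (D : ℤ) - K by push_cast; omega]
        rw [Int.sub_emod, Int.emod_self, sub_zero, Int.emod_emod_of_dvd _ dvd_rfl]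
    rw [h1, Int.emod_eq_of_lt (by positivity) (by exact_mod_cast hDlt)]
  have htD : t ≤ D := by
    by_contra hc
    push_neg at hc
    have hone : V K t p k = 1 := by
      rw [V, if_pos]
      rw [Finset.mem_Ico, hcast]
      constructor
      · positivity
      · exact_mod_cast hc
    omega
  have himg : ((Finset.Icc 1 (K - t) ×ˢ Finset.Icc 1 K ×ˢ Finset.Icc 1 (t + α)).filter
          (fun x => p = pvec K t x.1 x.2.1 x.2.2 ∧ k = kvec K t x.1 x.2.1 x.2.2))
      = (Finset.Icc 1 (t + α)).image (fun n => (jfun K t D n, rfun K t D k n, n)) := by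
    ext x
    simp only [Finset.mem_filter, Finset.mem_product, Finset.mem_Icc, Finset.mem_image]
    constructor
    · rintro ⟨⟨hj, hr, hn⟩, hP, hQ⟩
      refine ⟨x.2.2, hn, ?_⟩
      obtain ⟨h1, h2⟩ := (main_iff K t D p k x.1 x.2.1 x.2.2 ht htK hp1 hpK hk1 hkK htD hDlt
        hDpk hj.1 hj.2 hr.1 hr.2 hn.1 (by omega)).mp ⟨hP, hQ⟩
      exact Prod.ext h1.symm (Prod.ext h2.symm rfl)
    · rintro ⟨n, hn, rfl⟩
      obtain ⟨hjfl, hjfu⟩ := jfun_bounds K t D n htK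
      have hrfl : 1 ≤ rfun K t D k n := by rw [rfun]; omega
      have hrfu : rfun K t D k n ≤ K := by
        rw [rfun]
        have := Nat.mod_lt (k + K - kvec1 K t (jfun K t D n) n - 1) hK0
        omega
      refine ⟨⟨⟨hjfl, hjfu⟩, ⟨hrfl, hrfu⟩, hn⟩, ?_⟩
      exact (main_iff K t D p k (jfun K t D n) (rfun K t D k n) n ht htK hp1 hpK hk1 hkK htD
        hDlt hDpk hjfl hjfu hrfl hrfu hn.1 (by omega)).mpr ⟨rfl, rfl⟩
  rw [himg, Finset.card_image_of_injOn, Nat.card_Icc]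
  · omega
  · intro a _ b _ hab
    exact congrArg (fun y => y.2.2) hab
end

section
/- Let K ≥ 2, 1 ≤ t < K, t ≤ α ≤ K - t. Fix a pair (p,k) with V[p,k] = 0. Then there exist exactly t rounds r ∈ [K] such that k appears among the first t entries of the user vectors of round r, and in each such round there is exactly one transmission index j ∈ [K-t] with p = p_j^r[n] and k = k_j^r[n] for the matching position n ∈ [t]. -/
lemma one_le_pmod (a b : ℕ) : 1 ≤ pmod a b := Nat.le_add_left 1 _

lemma pmod_le {b : ℕ} (hb : 0 < b) (a : ℕ) : pmod a b ≤ b := by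
  have := Nat.mod_lt (a - 1) hb
  unfold pmod; omega

lemma pmod_modeq {a : ℕ} (b : ℕ) (ha : 1 ≤ a) : pmod a b ≡ a [MOD b] := by
  unfold pmod
  calc (a - 1) % b + 1 ≡ (a - 1) + 1 [MOD b] := (Nat.mod_modEq _ _).add_right 1
  _ = a := by omega

lemma eq_of_modeq {x y b : ℕ} (hx1 : 1 ≤ x) (hx2 : x ≤ b) (hy1 : 1 ≤ y) (hy2 : y ≤ b)
    (h : x ≡ y [MOD b]) : x = y := by
  have h' : x - 1 ≡ y - 1 [MOD b] := by
    have h2 : (x - 1) + 1 ≡ (y - 1) + 1 [MOD b] := by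
      simpa [Nat.sub_add_cancel hx1, Nat.sub_add_cancel hy1] using h
    exact Nat.ModEq.add_right_cancel' 1 h2
  have hx := Nat.mod_eq_of_lt (show x - 1 < b by omega)
  have hy := Nat.mod_eq_of_lt (show y - 1 < b by omega)
  unfold Nat.ModEq at h'
  omega

open Classical in
theorem vertical_component_counting (K t α : ℕ) (hK : 2 ≤ K) (ht : 1 ≤ t) (htK : t < K)
    (htα : t ≤ α) (hαK : α ≤ K - t) (p k : ℕ) (hp : p ∈ Finset.Icc 1 K)
    (hk : k ∈ Finset.Icc 1 K) (hzero : V K t p k = 0) :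
    ((Finset.Icc 1 K).filter (fun r => ∃ j ∈ Finset.Icc 1 (K - t),
        ∃ n ∈ Finset.Icc 1 t,
          p = pvec K t j r n ∧ k = kvec K t j r n)).card = t ∧
    ∀ r ∈ Finset.Icc 1 K,
      (∃ j ∈ Finset.Icc 1 (K - t), ∃ n ∈ Finset.Icc 1 t,
          p = pvec K t j r n ∧ k = kvec K t j r n) →
      ((Finset.Icc 1 (K - t)).filter (fun j => ∃ n ∈ Finset.Icc 1 t,
          p = pvec K t j r n ∧ k = kvec K t j r n)).card = 1 := by
  simp only [Finset.mem_Icc] at hp hk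
  have htt : t + t ≤ K := by omega
  -- extract the gap δ from hzero
  have hVe : ¬ (((k : ℤ) - p) % K ∈ Finset.Ico (0 : ℤ) (t : ℤ)) := by
    intro h
    simp only [V, if_pos h] at hzero
    exact one_ne_zero hzero
  have hK0 : (0 : ℤ) < K := by exact_mod_cast (show 0 < K by omega)
  have he0 : 0 ≤ ((k : ℤ) - p) % K := Int.emod_nonneg _ (by omega)
  have heK : ((k : ℤ) - p) % K < K := Int.emod_lt_of_pos _ hK0
  have het : (t : ℤ) ≤ ((k : ℤ) - p) % K := by
    by_contra hc
    exact hVe (Finset.mem_Ico.mpr ⟨he0, by omega⟩)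
  set δ : ℕ := (((k : ℤ) - p) % K).toNat with hδdef
  have hδ : (δ : ℤ) = ((k : ℤ) - p) % K := Int.toNat_of_nonneg he0
  have hδt : t ≤ δ := by
    have : (t : ℤ) ≤ (δ : ℤ) := by omega
    exact_mod_cast this
  have hδK : δ < K := by
    have : (δ : ℤ) < (K : ℤ) := by omega
    exact_mod_cast this
  have hkpδ : p + δ ≡ k [MOD K] := by
    rw [Nat.modEq_iff_dvd]
    refine ⟨((k : ℤ) - p) / K, ?_⟩
    have hd := Int.emod_def ((k : ℤ) - p) (K : ℤ)
    push_cast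
    linarith [hδ]
  set q : ℕ := K - δ with hqdef
  have hq1 : 1 ≤ q := by omega
  have hq2 : q ≤ K - t := by omega
  have hqk : q + k ≡ p [MOD K] := by
    calc q + k ≡ q + (p + δ) [MOD K] := (hkpδ.symm).add_left q
    _ = K + p := by omega
    _ ≡ p [MOD K] := Nat.add_mod_left K p
  -- computations of kvec / pvec in range
  have hkvec : ∀ j r n, n ≤ t → kvec K t j r n = pmod (n + r) K := by
    intro j r n hn; simp [kvec, kvec1, hn]
  have hpvec : ∀ j r n, n ≤ t →
      pvec K t j r n = pmod (pmod (t + j - n) (K - t) + n + r) K := by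
    intro j r n hn; simp [pvec, pvec1, hn]
  -- extraction
  have extract : ∀ r j n, 1 ≤ j → j ≤ K - t → 1 ≤ n → n ≤ t →
      p = pvec K t j r n → k = kvec K t j r n →
      n + r ≡ k [MOD K] ∧ pmod (t + j - n) (K - t) = q := by
    intro r j n hj1 hj2 hn1 hn2 hpv hkv
    have hkm : n + r ≡ k [MOD K] := by
      rw [hkv, hkvec j r n hn2]
      exact (pmod_modeq K (by omega)).symm
    refine ⟨hkm, ?_⟩
    set q' := pmod (t + j - n) (K - t) with hq'def
    have hq'1 : 1 ≤ q' := one_le_pmod _ _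
    have hq'2 : q' ≤ K - t := pmod_le (by omega) _
    have hpq' : q' + k ≡ p [MOD K] := by
      calc q' + k ≡ q' + (n + r) [MOD K] := hkm.symm.add_left q'
      _ = q' + n + r := by ring
      _ ≡ pmod (q' + n + r) K [MOD K] := (pmod_modeq K (by omega)).symm
      _ = p := (hpv.trans (hpvec j r n hn2)).symm
    exact eq_of_modeq hq'1 (by omega) hq1 (by omega)
      (Nat.ModEq.add_right_cancel' k (hpq'.trans hqk.symm))
  -- construction
  have construct : ∀ r n, 1 ≤ n → n ≤ t → n + r ≡ k [MOD K] →
      ∃ j, (1 ≤ j ∧ j ≤ K - t) ∧ p = pvec K t j r n ∧ k = kvec K t j r n := by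
    intro r n hn1 hn2 hnr
    set j := pmod (q + n + (K - t) - t) (K - t) with hjdef
    have hj1 : 1 ≤ j := one_le_pmod _ _
    have hj2 : j ≤ K - t := pmod_le (by omega) _
    have hjm : j ≡ q + n + (K - t) - t [MOD K - t] := pmod_modeq _ (by omega)
    have step : (t + j - n) + (n + t) ≡ q + (n + t) [MOD K - t] := by
      have e1 : (t + j - n) + (n + t) = t + j + t := by omega
      rw [e1]
      calc t + j + t ≡ t + (q + n + (K - t) - t) + t [MOD K - t] :=
            (hjm.add_left t).add_right t
      _ = q + (n + t) + (K - t) := by omega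
      _ ≡ q + (n + t) [MOD K - t] := Nat.add_mod_right _ _
    have hqq : pmod (t + j - n) (K - t) = q := by
      apply eq_of_modeq (one_le_pmod _ _) (pmod_le (by omega) _) hq1 hq2
      calc pmod (t + j - n) (K - t) ≡ t + j - n [MOD K - t] := pmod_modeq _ (by omega)
      _ ≡ q [MOD K - t] := Nat.ModEq.add_right_cancel' (n + t) step
    refine ⟨j, ⟨hj1, hj2⟩, ?_, ?_⟩
    · rw [hpvec j r n hn2, hqq]
      apply eq_of_modeq hp.1 hp.2 (one_le_pmod _ _) (pmod_le (by omega) _)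
      calc p ≡ q + k [MOD K] := hqk.symm
      _ ≡ q + (n + r) [MOD K] := hnr.symm.add_left q
      _ = q + n + r := by ring
      _ ≡ pmod (q + n + r) K [MOD K] := (pmod_modeq _ (by omega)).symm
    · rw [hkvec j r n hn2]
      apply eq_of_modeq hk.1 hk.2 (one_le_pmod _ _) (pmod_le (by omega) _)
      exact hnr.symm.trans ((pmod_modeq _ (by omega)).symm)
  -- uniqueness lemmas
  have nuniq : ∀ r n₁ n₂, 1 ≤ n₁ → n₁ ≤ t → 1 ≤ n₂ → n₂ ≤ t →
      n₁ + r ≡ k [MOD K] → n₂ + r ≡ k [MOD K] → n₁ = n₂ := by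
    intro r n₁ n₂ h11 h12 h21 h22 hm1 hm2
    exact eq_of_modeq h11 (by omega) h21 (by omega)
      (Nat.ModEq.add_right_cancel' r (hm1.trans hm2.symm))
  have juniq : ∀ n j₁ j₂, 1 ≤ n → n ≤ t → 1 ≤ j₁ → j₁ ≤ K - t → 1 ≤ j₂ → j₂ ≤ K - t →
      pmod (t + j₁ - n) (K - t) = pmod (t + j₂ - n) (K - t) → j₁ = j₂ := by
    intro n j₁ j₂ hn1 hn2 ha1 ha2 hb1 hb2 heq
    have e1 := pmod_modeq (K - t) (show 1 ≤ t + j₁ - n by omega)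
    have e2 := pmod_modeq (K - t) (show 1 ≤ t + j₂ - n by omega)
    rw [heq] at e1
    have h1 : t + j₁ - n ≡ t + j₂ - n [MOD K - t] := e1.symm.trans e2
    have h2 := h1.add_right n
    have e3 : t + j₁ - n + n = j₁ + t := by omega
    have e4 : t + j₂ - n + n = j₂ + t := by omega
    rw [e3, e4] at h2
    exact eq_of_modeq ha1 ha2 hb1 hb2 (Nat.ModEq.add_right_cancel' t h2)
  -- properties of the round map f
  have hfub : ∀ n, 1 ≤ n → n ≤ t →
      (1 ≤ pmod (k + K - n) K ∧ pmod (k + K - n) K ≤ K) ∧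
        n + pmod (k + K - n) K ≡ k [MOD K] := by
    intro n hn1 hn2
    refine ⟨⟨one_le_pmod _ _, pmod_le (by omega) _⟩, ?_⟩
    calc n + pmod (k + K - n) K ≡ n + (k + K - n) [MOD K] :=
        (pmod_modeq K (by omega)).add_left n
    _ = k + K := by omega
    _ ≡ k [MOD K] := Nat.add_mod_right k K
  -- the filter set equals the image of f
  have hset : (Finset.Icc 1 K).filter (fun r => ∃ j ∈ Finset.Icc 1 (K - t),
        ∃ n ∈ Finset.Icc 1 t, p = pvec K t j r n ∧ k = kvec K t j r n)
      = (Finset.Icc 1 t).image (fun n => pmod (k + K - n) K) := by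
    ext r
    simp only [Finset.mem_filter, Finset.mem_image, Finset.mem_Icc]
    constructor
    · rintro ⟨hr, j, hj, n, hn, hpv, hkv⟩
      refine ⟨n, hn, ?_⟩
      have hnr := (extract r j n hj.1 hj.2 hn.1 hn.2 hpv hkv).1
      have hf := hfub n hn.1 hn.2
      apply eq_of_modeq hf.1.1 hf.1.2 hr.1 hr.2
      apply Nat.ModEq.add_left_cancel' n
      exact hf.2.trans hnr.symm
    · rintro ⟨n, hn, hfr⟩
      have hf := hfub n hn.1 hn.2
      have hnr : n + r ≡ k [MOD K] := by rw [← hfr]; exact hf.2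
      obtain ⟨j, hj, hpv, hkv⟩ := construct r n hn.1 hn.2 hnr
      exact ⟨⟨by omega, by omega⟩, j, hj, n, hn, hpv, hkv⟩
  have hinj : Set.InjOn (fun n => pmod (k + K - n) K) (Finset.Icc 1 t) := by
    intro n₁ h1 n₂ h2 hfe
    simp only [Finset.coe_Icc, Set.mem_Icc] at h1 h2
    simp only at hfe
    have hf1 := hfub n₁ h1.1 h1.2
    have hf2 := hfub n₂ h2.1 h2.2
    apply eq_of_modeq (b := K) h1.1 (by omega) h2.1 (by omega)
    apply Nat.ModEq.add_right_cancel' (pmod (k + K - n₁) K)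
    calc n₁ + pmod (k + K - n₁) K ≡ k [MOD K] := hf1.2
    _ ≡ n₂ + pmod (k + K - n₂) K [MOD K] := hf2.2.symm
    _ = n₂ + pmod (k + K - n₁) K := by rw [hfe]
  constructor
  · rw [hset, Finset.card_image_of_injOn hinj, Nat.card_Icc]; omega
  · rintro r hr ⟨j₀, hj₀, n₀, hn₀, hpv₀, hkv₀⟩
    simp only [Finset.mem_Icc] at hr hj₀ hn₀
    rw [Finset.card_eq_one]
    refine ⟨j₀, Finset.eq_singleton_iff_unique_mem.mpr ⟨?_, ?_⟩⟩
    · simp only [Finset.mem_filter, Finset.mem_Icc]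
      exact ⟨hj₀, n₀, ⟨hn₀.1, hn₀.2⟩, hpv₀, hkv₀⟩
    · intro j hjmem
      simp only [Finset.mem_filter, Finset.mem_Icc] at hjmem
      obtain ⟨hjI, n, hnI, hpv, hkv⟩ := hjmem
      have E := extract r j n hjI.1 hjI.2 hnI.1 hnI.2 hpv hkv
      have E₀ := extract r j₀ n₀ hj₀.1 hj₀.2 hn₀.1 hn₀.2 hpv₀ hkv₀
      have hnn : n = n₀ := nuniq r n n₀ hnI.1 hnI.2 hn₀.1 hn₀.2 E.1 E₀.1
      subst hnn
      exact juniq n j j₀ hnI.1 hnI.2 hjI.1 hjI.2 hj₀.1 hj₀.2 (E.2.trans E₀.2.symm)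
end
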